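/- Let d ≥ 1, 0 < α < d, 1 < p, 1/q = 1/p − α/d, p' = p/(p−1), r ∈ (1, q/p'+1), c ≥ 1, L > 0, and set s = q − rq²/((r−1)(q−p)+pq) and t = rpq/((r−1)(q−p)+pq). Then for all x ≥ 0, y ≥ 0, w > 0 and v > 0 with 1 ≤ w v^{r−1} ≤ c, y^q w − (q/s) L^{q−s−t} c x^t y^s v^{1−t} ≥ ((q−s)/q) [ y^q w − (q/s)^{q/(q−s)} L^{q(q−s−t)/(q−s)} c^{q/(q−s)} (x w^{1/q})^p ]. -/

import Mathlib

noncomputable section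

theorem bellman_majorization
    (d : ℕ) (hd : 1 ≤ d) (α p q : ℝ) (hα : 0 < α) (hαd : α < (d : ℝ)) (hp : 1 < p)
    (hq : 1 / q = 1 / p - α / (d : ℝ))
    (r : ℝ) (hr : r ∈ Set.Ioo 1 (q / (p / (p - 1)) + 1))
    (c : ℝ) (hc : 1 ≤ c) (L : ℝ) (hL : 0 < L)
    (s t : ℝ)
    (hs : s = q - r * q ^ 2 / ((r - 1) * (q - p) + p * q))
    (ht : t = r * p * q / ((r - 1) * (q - p) + p * q))
    (x y w v : ℝ) (hx : 0 ≤ x) (hy : 0 ≤ y)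
    (hw : 0 < w) (hv : 0 < v) (hwv1 : 1 ≤ w * v ^ (r - 1)) (hwvc : w * v ^ (r - 1) ≤ c) :
    y ^ q * w - q / s * L ^ (q - s - t) * c * x ^ t * y ^ s * v ^ (1 - t) ≥
      (q - s) / q *
        (y ^ q * w - (q / s) ^ (q / (q - s)) * L ^ (q * (q - s - t) / (q - s)) *
          c ^ (q / (q - s)) * (x * w ^ (1 / q)) ^ p) := by
  obtain ⟨hr1, hr2⟩ := hr
  have hp0 : (0:ℝ) < p := lt_trans one_pos hp
  have hp1 : (0:ℝ) < p - 1 := sub_pos.mpr hp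
  have hp' : (0:ℝ) < p / (p - 1) := div_pos hp0 hp1
  have hq' : 0 < q / (p / (p - 1)) := by linarith
  have hq0 : (0:ℝ) < q := by
    have h := mul_pos hq' hp'
    rwa [div_mul_cancel₀ _ (ne_of_gt hp')] at h
  have hd0 : (0:ℝ) < (d : ℝ) := by
    have : 0 < d := hd
    exact_mod_cast this
  have hqp : p < q := by
    have h1 : 1 / q < 1 / p := by
      have : 0 < α / (d : ℝ) := div_pos hα hd0
      linarith [hq]
    exact lt_of_one_div_lt_one_div hq0 h1
  have hr2' : (r - 1) * p < q * (p - 1) := by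
    rw [div_div_eq_mul_div] at hr2
    have h3 : r - 1 < q * (p - 1) / p := by linarith
    exact (lt_div_iff₀ hp0).mp h3
  have hD : (0:ℝ) < (r - 1) * (q - p) + p * q := by
    nlinarith [mul_pos (sub_pos.mpr hr1) (sub_pos.mpr hqp)]
  have hD' : ((r - 1) * (q - p) + p * q) ≠ 0 := ne_of_gt hD
  have hDrq : r * q < (r - 1) * (q - p) + p * q := by nlinarith
  have hs0 : (0:ℝ) < s := by
    rw [hs]
    have h4 : r * q ^ 2 / ((r - 1) * (q - p) + p * q) < q := by
      rw [div_lt_iff₀ hD]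
      nlinarith [mul_pos hq0 (sub_pos.mpr hDrq)]
    linarith
  have hsq : s < q := by
    rw [hs]
    have h5 : 0 < r * q ^ 2 / ((r - 1) * (q - p) + p * q) := by positivity
    linarith
  have hqs0 : (0:ℝ) < q - s := sub_pos.mpr hsq
  have hq_ne : q ≠ 0 := ne_of_gt hq0
  have hqs_ne : q - s ≠ 0 := ne_of_gt hqs0
  have ht0 : (0:ℝ) < t := by
    rw [ht]
    have : 0 < r := lt_trans one_pos hr1
    positivity
  have ht_eq : p * ((q - s) / q) = t := by
    rw [ht, hs]; field_simp; ring
  have h1t : 1 - t = (1 - r) * ((s + t) / q) := by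
    rw [ht, hs]; field_simp; ring
  have hst0 : (0:ℝ) < (s + t) / q := div_pos (by linarith) hq0
  have hc0 : (0:ℝ) < c := lt_of_lt_of_le one_pos hc
  -- step A : v ^ (1-t) ≤ w ^ ((s+t)/q)
  have hvw : v ^ (1 - r) ≤ w := by
    have hv1 : (0:ℝ) < v ^ (r - 1) := Real.rpow_pos_of_pos hv _
    have hv2 : (0:ℝ) < v ^ (1 - r) := Real.rpow_pos_of_pos hv _
    have h6 : 1 * v ^ (1 - r) ≤ w * v ^ (r - 1) * v ^ (1 - r) :=
      mul_le_mul_of_nonneg_right hwv1 hv2.le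
    have h7 : w * v ^ (r - 1) * v ^ (1 - r) = w := by
      rw [mul_assoc, ← Real.rpow_add hv]
      norm_num
    rw [h7, one_mul] at h6
    exact h6
  have hA : v ^ (1 - t) ≤ w ^ ((s + t) / q) := by
    calc v ^ (1 - t) = (v ^ (1 - r)) ^ ((s + t) / q) := by
          rw [h1t, Real.rpow_mul hv.le]
      _ ≤ w ^ ((s + t) / q) :=
          Real.rpow_le_rpow (Real.rpow_nonneg hv.le _) hvw hst0.le
  -- notation
  have hG0 : (0:ℝ) < q / s * L ^ (q - s - t) * c := by
    have := Real.rpow_pos_of_pos hL (q - s - t)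
    have := div_pos hq0 hs0
    positivity
  set G : ℝ := q / s * L ^ (q - s - t) * c with hGdef
  -- coefficient identity
  have hBeq : (q / s) ^ (q / (q - s)) * L ^ (q * (q - s - t) / (q - s)) * c ^ (q / (q - s))
      = G ^ (q / (q - s)) := by
    rw [hGdef, Real.mul_rpow (by positivity) hc0.le,
      Real.mul_rpow (by positivity) (Real.rpow_nonneg hL.le _),
      ← Real.rpow_mul hL.le]
    congr 2
    field_simp
  have hxp : (x * w ^ (1 / q)) ^ p = x ^ p * w ^ (p / q) := by
    rw [Real.mul_rpow hx (Real.rpow_nonneg hw.le _), ← Real.rpow_mul hw.le]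
    congr 2
    ring
  -- step B : product identity
  have hB : (y ^ q * w) ^ (s / q) * (G ^ (q / (q - s)) * (x ^ p * w ^ (p / q))) ^ ((q - s) / q)
      = G * (x ^ t * (y ^ s * w ^ ((s + t) / q))) := by
    rw [Real.mul_rpow (Real.rpow_nonneg hy _) hw.le,
      Real.mul_rpow (Real.rpow_nonneg hG0.le _) (by positivity),
      Real.mul_rpow (Real.rpow_nonneg hx _) (Real.rpow_nonneg hw.le _),
      ← Real.rpow_mul hy, ← Real.rpow_mul hx, ← Real.rpow_mul hw.le,
      ← Real.rpow_mul hG0.le,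
      show q * (s / q) = s by field_simp,
      show q / (q - s) * ((q - s) / q) = 1 by field_simp,
      show p * ((q - s) / q) = t from ht_eq,
      show p / q * ((q - s) / q) = t / q by rw [← ht_eq]; ring,
      Real.rpow_one,
      show (s + t) / q = s / q + t / q by ring,
      Real.rpow_add hw]
    ring
  -- step C : AM-GM
  have hAM : (y ^ q * w) ^ (s / q) * (G ^ (q / (q - s)) * (x ^ p * w ^ (p / q))) ^ ((q - s) / q)
      ≤ s / q * (y ^ q * w) + (q - s) / q * (G ^ (q / (q - s)) * (x ^ p * w ^ (p / q))) :=
    Real.geom_mean_le_arith_mean2_weighted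
      (le_of_lt (div_pos hs0 hq0)) (le_of_lt (div_pos hqs0 hq0))
      (mul_nonneg (Real.rpow_nonneg hy _) hw.le)
      (mul_nonneg (Real.rpow_nonneg hG0.le _)
        (mul_nonneg (Real.rpow_nonneg hx _) (Real.rpow_nonneg hw.le _)))
      (by field_simp; ring)
  have key : G * (x ^ t * (y ^ s * v ^ (1 - t)))
      ≤ s / q * (y ^ q * w) + (q - s) / q * (G ^ (q / (q - s)) * (x ^ p * w ^ (p / q))) := by
    calc G * (x ^ t * (y ^ s * v ^ (1 - t)))
        ≤ G * (x ^ t * (y ^ s * w ^ ((s + t) / q))) := by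
          apply mul_le_mul_of_nonneg_left _ hG0.le
          apply mul_le_mul_of_nonneg_left _ (Real.rpow_nonneg hx _)
          exact mul_le_mul_of_nonneg_left hA (Real.rpow_nonneg hy _)
      _ = (y ^ q * w) ^ (s / q) * (G ^ (q / (q - s)) * (x ^ p * w ^ (p / q))) ^ ((q - s) / q) :=
          hB.symm
      _ ≤ _ := hAM
  -- assemble
  rw [ge_iff_le, hxp, hBeq]
  have hKe : G * x ^ t * y ^ s * v ^ (1 - t)
      = G * (x ^ t * (y ^ s * v ^ (1 - t))) := by ring
  have su : s / q + (q - s) / q = 1 := by field_simp; ring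
  have expand : (q - s) / q * (y ^ q * w - G ^ (q / (q - s)) * (x ^ p * w ^ (p / q)))
      = y ^ q * w - (s / q * (y ^ q * w)
        + (q - s) / q * (G ^ (q / (q - s)) * (x ^ p * w ^ (p / q)))) := by
    linear_combination (y ^ q * w) * su
  linarith [key, hKe, expand]

end
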